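/- Let (X_t) be nonnegative reals, (α_t) a decreasing sequence of positive reals with Σ_t α_t X_t < ∞ and Σ_{t≥1} α_t / (Σ_{τ=0}^{t−1} α_τ) = ∞. Define w_t = 2α_t/(Σ_{τ=0}^{t−1} α_τ) and Y_{t+1} = (1−w_t)Y_t + w_t X_t with Y_0 = X_0. Then Y_t = o(1/Σ_{τ=0}^{t−1} α_τ) and min_{0≤τ≤t} X_τ = o(1/Σ_{τ=0}^{t−1} α_τ) as t → ∞. -/

import Mathlib

open Filter Finset

lemma aux_tail18 (c : ℕ → ℝ) (hc0 : ∀ t, 0 ≤ c t) (hc : Summable c) (ε : ℝ) (hε : 0 < ε) :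
    ∃ T, ∀ t, T ≤ t → (∑ τ ∈ Finset.Ico T t, c τ) ≤ ε := by
  have htail : Tendsto (fun n => (∑' τ, c τ) - ∑ τ ∈ Finset.range n, c τ) atTop (nhds 0) := by
    have h := hc.hasSum.tendsto_sum_nat
    have := (tendsto_const_nhds (x := ∑' τ, c τ) (f := atTop (α := ℕ))).sub h
    simpa using this
  obtain ⟨T, hT⟩ := Metric.tendsto_atTop.mp htail ε hε
  refine ⟨T, fun t ht => ?_⟩
  have h1 : (∑ τ ∈ Finset.Ico T t, c τ)
      = (∑ τ ∈ Finset.range t, c τ) - ∑ τ ∈ Finset.range T, c τ :=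
    Finset.sum_Ico_eq_sub _ ht
  have h2 : (∑ τ ∈ Finset.range t, c τ) ≤ ∑' τ, c τ := Summable.sum_le_tsum _ (fun i _ => hc0 i) hc
  have h3 := hT T le_rfl
  rw [Real.dist_eq] at h3
  have h4 : (∑ τ ∈ Finset.range T, c τ) ≤ ∑' τ, c τ := Summable.sum_le_tsum _ (fun i _ => hc0 i) hc
  rw [abs_of_nonneg (by linarith)] at h3
  linarith

lemma aux_key18 (b c : ℕ → ℝ) (hb0 : ∀ t, 0 ≤ b t) (hbm : Monotone b)
    (hbtop : Tendsto b atTop atTop) (hc0 : ∀ t, 0 ≤ c t) (hc : Summable c) :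
    Tendsto (fun t => (∑ τ ∈ Finset.range t, b τ * c τ) / b t) atTop (nhds 0) := by
  rw [Metric.tendsto_atTop]
  intro ε hε
  obtain ⟨T, hTtail⟩ := aux_tail18 c hc0 hc (ε/2) (by linarith)
  set C := ∑ τ ∈ range T, b τ * c τ with hC
  have hC0 : 0 ≤ C := Finset.sum_nonneg (fun i _ => mul_nonneg (hb0 i) (hc0 i))
  obtain ⟨N, hN⟩ := eventually_atTop.mp (hbtop.eventually_ge_atTop (2*C/ε + 1))
  refine ⟨max N T, fun t ht => ?_⟩
  have htN : N ≤ t := le_trans (le_max_left _ _) ht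
  have htT : T ≤ t := le_trans (le_max_right _ _) ht
  have hbt : 2*C/ε + 1 ≤ b t := hN t htN
  have hbtpos : 0 < b t := by
    have : (0:ℝ) ≤ 2*C/ε := div_nonneg (by linarith) hε.le
    linarith
  have hsplit : (∑ τ ∈ range t, b τ * c τ) = C + ∑ τ ∈ Finset.Ico T t, b τ * c τ := by
    rw [hC, Finset.sum_range_add_sum_Ico _ htT]
  have hmid : (∑ τ ∈ Finset.Ico T t, b τ * c τ) ≤ b t * ∑ τ ∈ Finset.Ico T t, c τ := by
    rw [Finset.mul_sum]
    refine Finset.sum_le_sum (fun i hi => ?_)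
    have : b i ≤ b t := hbm (Finset.mem_Ico.mp hi).2.le
    exact mul_le_mul_of_nonneg_right this (hc0 i)
  have hIc0 : 0 ≤ ∑ τ ∈ Finset.Ico T t, c τ := Finset.sum_nonneg (fun i _ => hc0 i)
  have hnum0 : 0 ≤ ∑ τ ∈ range t, b τ * c τ :=
    Finset.sum_nonneg (fun i _ => mul_nonneg (hb0 i) (hc0 i))
  rw [Real.dist_eq, sub_zero, abs_of_nonneg (div_nonneg hnum0 hbtpos.le)]
  rw [div_lt_iff₀ hbtpos, hsplit]
  have h5 : b t * (∑ τ ∈ Finset.Ico T t, c τ) ≤ b t * (ε/2) :=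
    mul_le_mul_of_nonneg_left (hTtail t htT) hbtpos.le
  have h6 : C < ε/2 * b t := by
    have : ε/2 * (2*C/ε + 1) ≤ ε/2 * b t := mul_le_mul_of_nonneg_left hbt (by linarith)
    have he : ε/2 * (2*C/ε) = C := by field_simp
    nlinarith
  nlinarith

theorem stmt18 (X α : ℕ → ℝ)
    (hX : ∀ t, 0 ≤ X t) (hα : ∀ t, 0 < α t) (hdec : Antitone α)
    (hsum : Summable (fun t => α t * X t))
    (hdiv : ¬ Summable (fun t => α t / ∑ τ ∈ Finset.range t, α τ))
    (w Y : ℕ → ℝ)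
    (hw : ∀ t, w t = 2 * α t / ∑ τ ∈ Finset.range t, α τ)
    (hY0 : Y 0 = X 0)
    (hYrec : ∀ t, Y (t + 1) = (1 - w t) * Y t + w t * X t) :
    Tendsto (fun t => Y t * ∑ τ ∈ Finset.range t, α τ) atTop (nhds 0) ∧
      Tendsto (fun t =>
        ((Finset.range (t + 1)).inf' Finset.nonempty_range_add_one X)
          * ∑ τ ∈ Finset.range t, α τ) atTop (nhds 0) := by
  set A : ℕ → ℝ := fun t => ∑ τ ∈ Finset.range t, α τ with hAdef
  have hc0 : ∀ τ, 0 ≤ α τ * X τ := fun τ => mul_nonneg (hα τ).le (hX τ)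
  have hA0 : ∀ t, 0 ≤ A t := fun t => Finset.sum_nonneg (fun i _ => (hα i).le)
  have hAsucc : ∀ t, A (t+1) = A t + α t := fun t => Finset.sum_range_succ _ _
  have hAmono : Monotone A := by
    intro s t hst
    exact Finset.sum_le_sum_of_subset_of_nonneg (Finset.range_subset_range.mpr hst)
      (fun i _ _ => (hα i).le)
  have hA1 : ∀ t, 1 ≤ t → α 0 ≤ A t := by
    intro t ht
    have h1 : A 1 = α 0 := by simp [hAdef]
    calc α 0 = A 1 := h1.symm
    _ ≤ A t := hAmono ht
  have hApos : ∀ t, 1 ≤ t → 0 < A t := fun t ht => lt_of_lt_of_le (hα 0) (hA1 t ht)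
  have hnots : ¬ Summable α := by
    intro hs
    apply hdiv
    apply Summable.of_nonneg_of_le (fun t => div_nonneg (hα t).le (hA0 t)) _
      (hs.mul_right (α 0)⁻¹)
    intro t
    rcases Nat.eq_zero_or_pos t with h0 | h1
    · subst h0
      have hz : A 0 = 0 := by simp [hAdef]
      rw [hz, div_zero]
      exact mul_nonneg (hα 0).le (inv_nonneg.mpr (hα 0).le)
    · rw [div_eq_mul_inv]
      exact mul_le_mul_of_nonneg_left (inv_anti₀ (hα 0) (hA1 t h1)) (hα t).le
  have hAtop : Tendsto A atTop atTop :=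
    (not_summable_iff_tendsto_nat_atTop_of_nonneg (fun i => (hα i).le)).mp hnots
  -- ### the Y part
  set P : ℕ → ℝ := fun t => A t ^ 2 * Y t with hPdef
  have hstep : ∀ t, 2 ≤ t → |P (t+1)| ≤ |P t| + 8 * (A t * (α t * X t)) := by
    intro t ht
    have hAt : 0 < A t := hApos t (by omega)
    have haA : α t ≤ A t := le_trans (hdec (Nat.zero_le t)) (hA1 t (by omega))
    have h2aA : 2 * α t ≤ A t := by
      have htα : (t : ℝ) * α t ≤ A t := by
        have h1 : (t:ℝ) * α t = ∑ _τ ∈ Finset.range t, α t := by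
          rw [Finset.sum_const, Finset.card_range, nsmul_eq_mul]
        rw [h1, hAdef]
        exact Finset.sum_le_sum (fun i hi => hdec (le_of_lt (Finset.mem_range.mp hi)))
      have h2 : (2:ℝ) ≤ t := by exact_mod_cast ht
      nlinarith [hα t]
    have hw1 : w t ≤ 1 := by
      rw [hw t, div_le_one hAt]; linarith
    have hw0 : 0 ≤ w t := by
      rw [hw t]
      exact div_nonneg (by linarith [hα t]) (hA0 t)
    have hPsucc : P (t+1) = (A (t+1)^2 * (1 - w t)) * Y t + A (t+1)^2 * (w t * X t) := by
      simp only [hPdef, hYrec t]; ring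
    have hcoef0 : 0 ≤ A (t+1)^2 * (1 - w t) := mul_nonneg (sq_nonneg _) (by linarith)
    have hcoef : A (t+1)^2 * (1 - w t) ≤ A t ^ 2 := by
      rw [hw t, hAsucc t]
      have he : 1 - 2 * α t / A t = (A t - 2 * α t) / A t := by field_simp
      rw [he, mul_div_assoc', div_le_iff₀ hAt]
      nlinarith [hα t, (hα t).le, sq_nonneg (α t)]
    have hmid : |(A (t+1)^2 * (1 - w t)) * Y t| ≤ |P t| := by
      have h1 : |P t| = A t ^ 2 * |Y t| := by
        rw [hPdef]; simp only []
        rw [abs_mul, abs_of_nonneg (sq_nonneg (A t))]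
      rw [abs_mul, abs_of_nonneg hcoef0, h1]
      exact mul_le_mul_of_nonneg_right hcoef (abs_nonneg _)
    have hterm : A (t+1)^2 * (w t * X t) ≤ 8 * (A t * (α t * X t)) := by
      rw [hw t, hAsucc t]
      have hX' := hX t
      have key : (A t + α t)^2 * (2 * α t * X t) ≤ 8 * (A t * (α t * X t)) * A t := by
        nlinarith [mul_nonneg (mul_nonneg (mul_nonneg (hα t).le hX')
          (sub_nonneg.mpr haA)) (by linarith [hα t, hAt] : (0:ℝ) ≤ 3 * A t + α t)]
      calc (A t + α t)^2 * (2 * α t / A t * X t)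
          = ((A t + α t)^2 * (2 * α t * X t)) / A t := by ring
      _ ≤ (8 * (A t * (α t * X t)) * A t) / A t := by
          exact (div_le_div_iff_of_pos_right hAt).mpr key
      _ = 8 * (A t * (α t * X t)) := by field_simp
    have hterm0 : 0 ≤ A (t+1)^2 * (w t * X t) :=
      mul_nonneg (sq_nonneg _) (mul_nonneg hw0 (hX t))
    calc |P (t+1)| = |(A (t+1)^2 * (1 - w t)) * Y t + A (t+1)^2 * (w t * X t)| := by
          rw [hPsucc]
    _ ≤ |(A (t+1)^2 * (1 - w t)) * Y t| + |A (t+1)^2 * (w t * X t)| := abs_add_le _ _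
    _ ≤ |P t| + 8 * (A t * (α t * X t)) := by
          rw [abs_of_nonneg hterm0]; linarith
  have hind : ∀ t, 2 ≤ t → |P t| ≤ |P 2| + ∑ τ ∈ Finset.Ico 2 t, 8 * (A τ * (α τ * X τ)) := by
    refine Nat.le_induction ?_ ?_
    · simp
    · intro n hn ih
      rw [Finset.sum_Ico_succ_top hn]
      linarith [hstep n hn]
  have hbound : ∀ t, 2 ≤ t →
      |Y t * A t| ≤ (|P 2| + ∑ τ ∈ Finset.range t, 8 * (A τ * (α τ * X τ))) / A t := by
    intro t ht
    have hAt : 0 < A t := hApos t (by omega)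
    have h1 : Y t * A t = P t / A t := by
      rw [hPdef]; field_simp
    rw [h1, abs_div, abs_of_pos hAt]
    apply (div_le_div_iff_of_pos_right hAt).mpr
    refine le_trans (hind t ht) (add_le_add_right ?_ _)
    have hsub : Finset.Ico 2 t ⊆ Finset.range t := by
      intro x hx
      simp only [Finset.mem_Ico] at hx
      exact Finset.mem_range.mpr hx.2
    refine Finset.sum_le_sum_of_subset_of_nonneg hsub (fun i _ _ => ?_)
    have h2 := hA0 i
    have h3 := hc0 i
    nlinarith
  have hkey := aux_key18 A (fun τ => α τ * X τ) hA0 hAmono hAtop hc0 hsum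
  have hinv : Tendsto (fun t => (A t)⁻¹) atTop (nhds 0) := hAtop.inv_tendsto_atTop
  have hconst : Tendsto (fun t => |P 2| / A t) atTop (nhds 0) := by
    simpa [div_eq_mul_inv] using hinv.const_mul |P 2|
  have hg : Tendsto (fun t => (|P 2| + ∑ τ ∈ Finset.range t, 8 * (A τ * (α τ * X τ))) / A t)
      atTop (nhds 0) := by
    have h2 : Tendsto (fun t => 8 * ((∑ τ ∈ Finset.range t, A τ * (α τ * X τ)) / A t))
        atTop (nhds 0) := by simpa using hkey.const_mul 8
    have h3 := hconst.add h2
    rw [add_zero] at h3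
    refine h3.congr (fun t => ?_)
    have h4 : (∑ τ ∈ Finset.range t, 8 * (A τ * (α τ * X τ)))
        = 8 * ∑ τ ∈ Finset.range t, A τ * (α τ * X τ) := (Finset.mul_sum _ _ _).symm
    rw [h4, add_div, mul_div_assoc]
  have hYtend : Tendsto (fun t => Y t * A t) atTop (nhds 0) := by
    apply squeeze_zero_norm' _ hg
    refine eventually_atTop.mpr ⟨2, fun t ht => ?_⟩
    simpa only [Real.norm_eq_abs] using hbound t ht
  -- ### the min part
  set m : ℕ → ℝ := fun t => (Finset.range (t+1)).inf' Finset.nonempty_range_add_one X with hmdef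
  have hm0 : ∀ t, 0 ≤ m t := fun t => Finset.le_inf' _ _ (fun i _ => hX i)
  have hmle : ∀ τ t, τ ≤ t → m t ≤ X τ := fun τ t h =>
    Finset.inf'_le _ (Finset.mem_range.mpr (Nat.lt_succ_of_le h))
  have hmA : ∀ t, m t * A t ≤ ∑ τ ∈ Finset.range t, α τ * X τ := by
    intro t
    have h1 : m t * A t = ∑ τ ∈ Finset.range t, m t * α τ := by
      simp [hAdef, Finset.mul_sum]
    rw [h1]
    refine Finset.sum_le_sum (fun i hi => ?_)
    have h2 : m t ≤ X i := hmle i t (Nat.le_of_lt (Finset.mem_range.mp hi))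
    calc m t * α i ≤ X i * α i := mul_le_mul_of_nonneg_right h2 (hα i).le
    _ = α i * X i := mul_comm _ _
  have hmtend : Tendsto m atTop (nhds 0) := by
    have hub : ∀ᶠ t in atTop, m t ≤ (∑' τ, α τ * X τ) / A t := by
      refine eventually_atTop.mpr ⟨1, fun t ht => ?_⟩
      rw [le_div_iff₀ (hApos t ht)]
      exact le_trans (hmA t) (Summable.sum_le_tsum _ (fun i _ => hc0 i) hsum)
    refine squeeze_zero' (Eventually.of_forall hm0) hub ?_
    simpa [div_eq_mul_inv] using hinv.const_mul (∑' τ, α τ * X τ)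
  have hmintend : Tendsto (fun t => m t * A t) atTop (nhds 0) := by
    rw [Metric.tendsto_atTop]
    intro ε hε
    obtain ⟨T, hT⟩ := aux_tail18 (fun τ => α τ * X τ) hc0 hsum (ε/4) (by linarith)
    have h1 : Tendsto (fun t => m t * A T) atTop (nhds 0) := by
      simpa using hmtend.mul_const (A T)
    obtain ⟨N, hN⟩ := Metric.tendsto_atTop.mp h1 (ε/4) (by linarith)
    refine ⟨max N T, fun t ht => ?_⟩
    have htN : N ≤ t := le_trans (le_max_left _ _) ht
    have htT : T ≤ t := le_trans (le_max_right _ _) ht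
    have hs1 : m t * A t = ∑ τ ∈ Finset.range t, m t * α τ := by
      simp [hAdef, Finset.mul_sum]
    have hsplit : (∑ τ ∈ Finset.range T, m t * α τ) + ∑ τ ∈ Finset.Ico T t, m t * α τ
        = ∑ τ ∈ Finset.range t, m t * α τ := Finset.sum_range_add_sum_Ico _ htT
    have hfirst : (∑ τ ∈ Finset.range T, m t * α τ) = m t * A T := by
      simp [hAdef, Finset.mul_sum]
    have hsecond : (∑ τ ∈ Finset.Ico T t, m t * α τ) ≤ ∑ τ ∈ Finset.Ico T t, α τ * X τ := by
      refine Finset.sum_le_sum (fun i hi => ?_)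
      have h2 : m t ≤ X i := hmle i t (Finset.mem_Ico.mp hi).2.le
      calc m t * α i ≤ X i * α i := mul_le_mul_of_nonneg_right h2 (hα i).le
      _ = α i * X i := mul_comm _ _
    have h3 := hN t htN
    rw [Real.dist_eq, sub_zero] at h3
    have h4 : m t * A T ≤ |m t * A T| := le_abs_self _
    have h5 := hT t htT
    have hnn : 0 ≤ m t * A t := mul_nonneg (hm0 t) (hA0 t)
    rw [Real.dist_eq, sub_zero, abs_of_nonneg hnn]
    linarith [hs1, hsplit, hfirst, hsecond]
  exact ⟨hYtend, hmintend⟩
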